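/- Let γ > 0 and let φ : [0,∞) → ℝ satisfy φ(1) = −1 and φ(z) ≥ −z^{1+γ} for all z ≥ 0. Let f and g be nonnegative measurable functions on ℝ^k such that ∫f^{1+γ}, ∫g^{1+γ}, and ∫f g^γ are finite and ∫g^{1+γ} > 0 and ∫f^{1+γ} > 0. Then the Hölder score satisfies S_φ(f,g) ≥ S_φ(f,f), i.e., φ(⟨f g^γ⟩/⟨g^{1+γ}⟩)·⟨g^{1+γ}⟩ ≥ −⟨f^{1+γ}⟩. -/

import Mathlib

open MeasureTheory

lemma memLp_of_int_rpow {α : Type*} [MeasurableSpace α] {μ : Measure α} {p : ℝ} (hp : 0 < p)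
    {f : α → ℝ} (hfm : Measurable f) (hf0 : ∀ x, 0 ≤ f x)
    (hint : Integrable (fun x => f x ^ p) μ) : MemLp f (ENNReal.ofReal p) μ := by
  have hq0 : (ENNReal.ofReal p) ≠ 0 := by simp [ENNReal.ofReal_eq_zero, not_le, hp]
  have hqt : (ENNReal.ofReal p) ≠ ⊤ := ENNReal.ofReal_ne_top
  have h := (memLp_norm_rpow_iff (μ := μ) (q := ENNReal.ofReal p) (p := ENNReal.ofReal p)
      hfm.aestronglyMeasurable hq0 hqt)
  rw [ENNReal.div_self hq0 hqt] at h
  refine h.1 ?_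
  rw [memLp_one_iff_integrable]
  have heq : (fun x : α => ‖f x‖ ^ (ENNReal.ofReal p).toReal) = fun x => f x ^ p := by
    ext x
    rw [Real.norm_of_nonneg (hf0 x), ENNReal.toReal_ofReal hp.le]
  rw [heq]
  exact hint

theorem holder_score_proper {k : ℕ} (γ : ℝ) (hγ : 0 < γ)
    (φ : ℝ → ℝ) (hφ1 : φ 1 = -1)
    (hφ : ∀ z : ℝ, 0 ≤ z → -(z ^ (1 + γ)) ≤ φ z)
    (f g : (Fin k → ℝ) → ℝ)
    (hfm : Measurable f) (hgm : Measurable g)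
    (hf0 : ∀ x, 0 ≤ f x) (hg0 : ∀ x, 0 ≤ g x)
    (hfint : Integrable (fun x => f x ^ (1 + γ)))
    (hgint : Integrable (fun x => g x ^ (1 + γ)))
    (hfgint : Integrable (fun x => f x * g x ^ γ))
    (hgpos : 0 < ∫ x, g x ^ (1 + γ))
    (hfpos : 0 < ∫ x, f x ^ (1 + γ)) :
    -(∫ x, f x ^ (1 + γ)) ≤
      φ ((∫ x, f x * g x ^ γ) / (∫ x, g x ^ (1 + γ))) * (∫ x, g x ^ (1 + γ)) := by
  set F := ∫ x, f x ^ (1 + γ) with hF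
  set G := ∫ x, g x ^ (1 + γ) with hG
  set I := ∫ x, f x * g x ^ γ with hI
  set p := 1 + γ with hp
  set q := (1 + γ) / γ with hq
  have hp0 : 0 < p := by simp only [hp]; linarith
  have hq0 : 0 < q := by rw [hq]; positivity
  have hpq : p.HolderConjugate q := by
    rw [Real.holderConjugate_iff]
    constructor
    · simp only [hp]; linarith
    · rw [hp, hq]; field_simp
  have hI0 : 0 ≤ I := by
    apply integral_nonneg
    intro x
    exact mul_nonneg (hf0 x) (Real.rpow_nonneg (hg0 x) γ)
  have hgqeq : ∀ x, (g x ^ γ) ^ q = g x ^ (1 + γ) := by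
    intro x
    rw [← Real.rpow_mul (hg0 x)]
    congr 1
    rw [hq]
    field_simp
  -- Hölder's inequality
  have hold : I ≤ F ^ (1 / p) * G ^ (1 / q) := by
    have hmemf : MemLp f (ENNReal.ofReal p) := memLp_of_int_rpow hp0 hfm hf0 hfint
    have hmemg : MemLp (fun x => g x ^ γ) (ENNReal.ofReal q) := by
      have hgm' : Measurable (fun x => g x ^ γ) :=
        (Real.continuous_rpow_const hγ.le).measurable.comp hgm
      apply memLp_of_int_rpow hq0 hgm' (fun x => Real.rpow_nonneg (hg0 x) γ)
      have : (fun x => (g x ^ γ) ^ q) = fun x => g x ^ (1 + γ) := funext hgqeq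
      rw [this]
      exact hgint
    have hh := integral_mul_le_Lp_mul_Lq_of_nonneg hpq
      (Filter.Eventually.of_forall hf0)
      (Filter.Eventually.of_forall (fun x => Real.rpow_nonneg (hg0 x) γ)) hmemf hmemg
    simpa only [hgqeq] using hh
  have hIp : I ^ p ≤ F * G ^ (p - 1) := by
    calc I ^ p ≤ (F ^ (1 / p) * G ^ (1 / q)) ^ p :=
          Real.rpow_le_rpow hI0 hold hp0.le
      _ = F * G ^ (p - 1) := by
          rw [Real.mul_rpow (Real.rpow_nonneg hfpos.le _) (Real.rpow_nonneg hgpos.le _),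
            ← Real.rpow_mul hfpos.le, ← Real.rpow_mul hgpos.le,
            one_div_mul_cancel hp0.ne', Real.rpow_one]
          congr 1
          rw [hq, hp]
          field_simp
          ring_nf
  have hkey : (I / G) ^ p * G ≤ F := by
    rw [Real.div_rpow hI0 hgpos.le, div_mul_eq_mul_div,
      div_le_iff₀ (Real.rpow_pos_of_pos hgpos p)]
    calc I ^ p * G ≤ (F * G ^ (p - 1)) * G :=
          mul_le_mul_of_nonneg_right hIp hgpos.le
      _ = F * G ^ p := by
          rw [mul_assoc]
          congr 1
          rw [← Real.rpow_add_one hgpos.ne' (p - 1)]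
          ring_nf
  have hz := hφ (I / G) (div_nonneg hI0 hgpos.le)
  calc -F ≤ -((I / G) ^ p * G) := neg_le_neg hkey
    _ = -((I / G) ^ p) * G := by ring
    _ ≤ φ (I / G) * G := mul_le_mul_of_nonneg_right hz hgpos.le
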